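/- Let α ∈ ℂ with α² ∉ {0, −4, 50}, and let f(x,y) = x⁶ + αx³y³ − y⁶ ∈ ℂ[x,y]. Then the set of matrices γ = [[a,b],[c,d]] ∈ SL(2,ℂ) for which there exists c₀ ∈ ℂ, c₀ ≠ 0, with f(ax+by, cx+dy) = c₀·f(x,y) has exactly 12 elements. -/

import Mathlib

open MvPolynomial

/-- The binary sextic `f_α = x⁶ + αx³y³ − y⁶`. -/
noncomputable def sexticQ12 (α : ℂ) : MvPolynomial (Fin 2) ℂ :=
  X 0 ^ 6 + C α * X 0 ^ 3 * X 1 ^ 3 - X 1 ^ 6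

lemma q12_classify (α a b c d c₀ : ℂ) (hα0 : α ≠ 0) (hα50 : α ^ 2 ≠ 50)
    (hdet : a * d - b * c = 1)
    (hs : ∀ x y : ℂ, (a*x+b*y)^6 + α*((a*x+b*y)^3*(c*x+d*y)^3) - (c*x+d*y)^6
        = c₀*(x^6+α*(x^3*y^3)-y^6)) :
    (b = 0 ∧ c = 0 ∧ a ^ 6 = 1 ∧ d = a ^ 5 ∧ c₀ = 1) ∨
    (a = 0 ∧ d = 0 ∧ c ^ 6 = 1 ∧ b = -c ^ 5 ∧ c₀ = -1) := by
  have he0 : a^6 + α*a^3*c^3 - c^6 = c₀ := by linear_combination hs 1 0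
  have he1 : 6*a^5*b + α*(3*a^2*b*c^3 + 3*a^3*c^2*d) - 6*c^5*d = 0 := by
    linear_combination (1/12)*(hs 1 1) + (1/24)*(hs (-1) 1) + (-1/24)*(hs 2 1) +
      (-1/120)*(hs (-2) 1) + (1/120)*(hs 3 1) + (-3 : ℂ)*(hs 1 0) + (-1/12)*(hs 0 1)
  have he2 : 15*a^4*b^2 + α*(3*a*b^2*c^3 + 9*a^2*b*c^2*d + 3*a^3*c*d^2) - 15*c^4*d^2 = 0 := by
    linear_combination (-1/6)*(hs 1 1) + (-1/6)*(hs (-1) 1) + (1/24)*(hs 2 1) +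
      (1/24)*(hs (-2) 1) + (-5 : ℂ)*(hs 1 0) + (1/4)*(hs 0 1)
  have he3 : 20*a^3*b^3 + α*(b^3*c^3 + 9*a*b^2*c^2*d + 9*a^2*b*c*d^2 + a^3*d^3) - 20*c^3*d^3
      = c₀*α := by
    linear_combination (-7/12)*(hs 1 1) + (-1/24)*(hs (-1) 1) + (7/24)*(hs 2 1) +
      (-1/24)*(hs (-2) 1) + (-1/24)*(hs 3 1) + (15 : ℂ)*(hs 1 0) + (5/12)*(hs 0 1)
  have he4 : 15*a^2*b^4 + α*(3*b^3*c^2*d + 9*a*b^2*c*d^2 + 3*a^2*b*d^3) - 15*c^2*d^4 = 0 := by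
    linear_combination (2/3)*(hs 1 1) + (2/3)*(hs (-1) 1) + (-1/24)*(hs 2 1) +
      (-1/24)*(hs (-2) 1) + (4 : ℂ)*(hs 1 0) + (-5/4)*(hs 0 1)
  have he5 : 6*a*b^5 + α*(3*b^3*c*d^2 + 3*a*b^2*d^3) - 6*c*d^5 = 0 := by
    linear_combination (hs 1 1) + (-1/2)*(hs (-1) 1) + (-1/4)*(hs 2 1) +
      (1/20)*(hs (-2) 1) + (1/30)*(hs 3 1) + (-12 : ℂ)*(hs 1 0) + (-1/3)*(hs 0 1)
  have hα50' : α^2 - 50 ≠ 0 := sub_ne_zero.2 hα50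
  have h1 : (α^2-50) * (a*c)^2 = 0 := by
    linear_combination (10/3)*(a^6 + α*a^3*c^3 - c^6)*he4 -
      (5/3)*(6*a^5*b + α*(3*a^2*b*c^3 + 3*a^3*c^2*d) - 6*c^5*d)*he3 -
      (5/3)*c₀*α*he1 +
      (2/3)*(15*a^4*b^2 + α*(3*a*b^2*c^3 + 9*a^2*b*c^2*d + 3*a^3*c*d^2) - 15*c^4*d^2)*he2 -
      (α^2-50)*(a*c)^2*((a*d-b*c)^3+(a*d-b*c)^2+(a*d-b*c)+1)*hdet
  have h2 : (α^2-50) * (b*d)^2 = 0 := by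
    linear_combination (10/3)*(b^6 + α*b^3*d^3 - d^6)*he2 -
      (5/3)*(6*a*b^5 + α*(3*b^3*c*d^2 + 3*a*b^2*d^3) - 6*c*d^5)*he3 -
      (5/3)*c₀*α*he5 +
      (2/3)*(15*a^2*b^4 + α*(3*b^3*c^2*d + 9*a*b^2*c*d^2 + 3*a^2*b*d^3) - 15*c^2*d^4)*he4 -
      (α^2-50)*(b*d)^2*((a*d-b*c)^3+(a*d-b*c)^2+(a*d-b*c)+1)*hdet
  have hac : a * c = 0 := by
    have := (mul_eq_zero.1 h1).resolve_left hα50'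
    exact pow_eq_zero_iff (by norm_num) |>.1 this
  have hbd : b * d = 0 := by
    have := (mul_eq_zero.1 h2).resolve_left hα50'
    exact pow_eq_zero_iff (by norm_num) |>.1 this
  by_cases ha : a = 0
  · subst ha
    right
    have hbc : b * c = -1 := by linear_combination -hdet
    have hb : b ≠ 0 := by intro h; rw [h, zero_mul] at hbc; norm_num at hbc
    have hd : d = 0 := (mul_eq_zero.1 hbd).resolve_left hb
    subst hd
    have hbc3 : b^3*c^3 = c₀ := by
      have h : α * (b^3*c^3 - c₀) = 0 := by linear_combination he3
      have := (mul_eq_zero.1 h).resolve_left hα0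
      linear_combination this
    have hc0 : c₀ = -1 := by linear_combination (b^2*c^2 - b*c + 1)*hbc - hbc3
    have hc6 : c^6 = 1 := by linear_combination -he0 - hc0
    exact ⟨rfl, rfl, hc6, by linear_combination c^5*hbc - b*hc6, hc0⟩
  · left
    have hc : c = 0 := (mul_eq_zero.1 hac).resolve_left ha
    subst hc
    have had : a * d = 1 := by linear_combination hdet
    have hd : d ≠ 0 := by intro h; rw [h, mul_zero] at had; norm_num at had
    have hb : b = 0 := (mul_eq_zero.1 hbd).resolve_right hd
    subst hb
    have had3 : a^3*d^3 = c₀ := by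
      have h : α * (a^3*d^3 - c₀) = 0 := by linear_combination he3
      have := (mul_eq_zero.1 h).resolve_left hα0
      linear_combination this
    have hc0 : c₀ = 1 := by linear_combination -had3 + (a^2*d^2 + a*d + 1)*had
    have ha6 : a^6 = 1 := by linear_combination he0 + hc0
    exact ⟨rfl, rfl, ha6, by linear_combination a^5*had - d*ha6, hc0⟩

lemma q12_poly_iff (α a b c d c₀ : ℂ) :
    aeval ![C a * X 0 + C b * X 1, C c * X 0 + C d * X 1] (sexticQ12 α) = C c₀ * sexticQ12 α ↔
    ∀ x y : ℂ, (a*x+b*y)^6 + α*((a*x+b*y)^3*(c*x+d*y)^3) - (c*x+d*y)^6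
        = c₀*(x^6+α*(x^3*y^3)-y^6) := by
  rw [MvPolynomial.funext_iff]
  constructor
  · intro h x y
    have := h ![x, y]
    simp only [sexticQ12, map_add, map_sub, map_mul, map_pow, aeval_X, aeval_C,
      Matrix.cons_val_zero, Matrix.cons_val_one, Matrix.head_cons, algebraMap_eq,
      eval_add, eval_sub, eval_mul, eval_pow, eval_X, eval_C] at this
    linear_combination this
  · intro h v
    have := h (v 0) (v 1)
    simp only [sexticQ12, map_add, map_sub, map_mul, map_pow, aeval_X, aeval_C,
      Matrix.cons_val_zero, Matrix.cons_val_one, Matrix.head_cons, algebraMap_eq,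
      eval_add, eval_sub, eval_mul, eval_pow, eval_X, eval_C]
    linear_combination this

/-- For `α² ∉ {0, −4, 50}`, the set of `γ ∈ SL(2,ℂ)` carrying
`f = x⁶+αx³y³−y⁶` to a nonzero multiple of itself has exactly 12 elements. -/
theorem card_stabilizer_sexticQ12 (α : ℂ) (hα : α ^ 2 ∉ ({0, -4, 50} : Set ℂ)) :
    {γ : Matrix.SpecialLinearGroup (Fin 2) ℂ |
        ∃ c₀ : ℂ, c₀ ≠ 0 ∧
          aeval ![C ((γ : Matrix (Fin 2) (Fin 2) ℂ) 0 0) * X 0 +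
                   C ((γ : Matrix (Fin 2) (Fin 2) ℂ) 0 1) * X 1,
                  C ((γ : Matrix (Fin 2) (Fin 2) ℂ) 1 0) * X 0 +
                   C ((γ : Matrix (Fin 2) (Fin 2) ℂ) 1 1) * X 1]
            (sexticQ12 α) = C c₀ * sexticQ12 α}.ncard = 12 := by
  have hα0 : α ≠ 0 := by rintro rfl; exact hα (by norm_num)
  have hα50 : α ^ 2 ≠ 50 := by intro h; exact hα (by simp [h])
  set S : Set (Matrix.SpecialLinearGroup (Fin 2) ℂ) :=
    {γ : Matrix.SpecialLinearGroup (Fin 2) ℂ |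
        ∃ c₀ : ℂ, c₀ ≠ 0 ∧
          aeval ![C ((γ : Matrix (Fin 2) (Fin 2) ℂ) 0 0) * X 0 +
                   C ((γ : Matrix (Fin 2) (Fin 2) ℂ) 0 1) * X 1,
                  C ((γ : Matrix (Fin 2) (Fin 2) ℂ) 1 0) * X 0 +
                   C ((γ : Matrix (Fin 2) (Fin 2) ℂ) 1 1) * X 1]
            (sexticQ12 α) = C c₀ * sexticQ12 α} with hSdef
  set R : Set ℂ := {z : ℂ | z ^ 6 = 1} with hRdef
  set T : Set (Matrix (Fin 2) (Fin 2) ℂ) :=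
    (fun z : ℂ => !![z, 0; 0, z^5]) '' R ∪ (fun z : ℂ => !![0, -z^5; z, 0]) '' R with hTdef
  have hinj : Function.Injective
      ((↑·) : Matrix.SpecialLinearGroup (Fin 2) ℂ → Matrix (Fin 2) (Fin 2) ℂ) :=
    fun γ₁ γ₂ h => Subtype.ext h
  have himg : ((↑·) : Matrix.SpecialLinearGroup (Fin 2) ℂ → Matrix (Fin 2) (Fin 2) ℂ) '' S = T := by
    ext m
    constructor
    · rintro ⟨γ, hγ, rfl⟩
      obtain ⟨c₀, hc₀, hpoly⟩ := hγ
      rw [q12_poly_iff] at hpoly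
      have hdet : (γ : Matrix (Fin 2) (Fin 2) ℂ) 0 0 * (γ : Matrix (Fin 2) (Fin 2) ℂ) 1 1 -
          (γ : Matrix (Fin 2) (Fin 2) ℂ) 0 1 * (γ : Matrix (Fin 2) (Fin 2) ℂ) 1 0 = 1 := by
        have := γ.2
        rwa [Matrix.det_fin_two] at this
      rcases q12_classify α _ _ _ _ c₀ hα0 hα50 hdet hpoly with
        ⟨hb, hc, ha6, hd5, -⟩ | ⟨ha, hd, hc6, hb5, -⟩
      · left
        refine ⟨(γ : Matrix (Fin 2) (Fin 2) ℂ) 0 0, ha6, ?_⟩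
        have hme := Matrix.eta_fin_two (γ : Matrix (Fin 2) (Fin 2) ℂ)
        rw [hb, hc, hd5] at hme
        exact hme.symm
      · right
        refine ⟨(γ : Matrix (Fin 2) (Fin 2) ℂ) 1 0, hc6, ?_⟩
        have hme := Matrix.eta_fin_two (γ : Matrix (Fin 2) (Fin 2) ℂ)
        rw [ha, hd, hb5] at hme
        exact hme.symm
    · rintro (⟨z, hz, rfl⟩ | ⟨z, hz, rfl⟩) <;> have hz' : z ^ 6 = 1 := hz
      · refine ⟨⟨!![z, 0; 0, z^5], by rw [Matrix.det_fin_two_of]; linear_combination hz'⟩,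
          ⟨1, one_ne_zero, ?_⟩, rfl⟩
        rw [Matrix.SpecialLinearGroup.coe_mk]
        simp only [Matrix.cons_val', Matrix.cons_val_zero, Matrix.cons_val_one,
          Matrix.head_cons, Matrix.empty_val', Matrix.cons_val_fin_one, Matrix.head_fin_const,
          Matrix.of_apply]
        rw [q12_poly_iff]
        intro x y
        linear_combination (x^6 + α*x^3*y^3*(z^12+z^6+1) -
          y^6*(z^24+z^18+z^12+z^6+1)) * hz'
      · refine ⟨⟨!![0, -z^5; z, 0], by rw [Matrix.det_fin_two_of]; linear_combination hz'⟩,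
          ⟨-1, by norm_num, ?_⟩, rfl⟩
        rw [Matrix.SpecialLinearGroup.coe_mk]
        simp only [Matrix.cons_val', Matrix.cons_val_zero, Matrix.cons_val_one,
          Matrix.head_cons, Matrix.empty_val', Matrix.cons_val_fin_one, Matrix.head_fin_const,
          Matrix.of_apply]
        rw [q12_poly_iff]
        intro x y
        linear_combination (-x^6 - α*x^3*y^3*(z^12+z^6+1) +
          y^6*(z^24+z^18+z^12+z^6+1)) * hz'
  have hprim : IsPrimitiveRoot (Complex.exp (2 * Real.pi * Complex.I / 6)) 6 :=
    Complex.isPrimitiveRoot_exp 6 (by norm_num)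
  have hRset : R = ↑(Polynomial.nthRootsFinset 6 (1 : ℂ)) := by
    ext z
    simp [hRdef, Polynomial.mem_nthRootsFinset (by norm_num : 0 < 6) (1 : ℂ)]
  have hRfin : R.Finite := by rw [hRset]; exact (Polynomial.nthRootsFinset 6 (1 : ℂ)).finite_toSet
  have hRcard : R.ncard = 6 := by
    rw [hRset, Set.ncard_coe_finset, hprim.card_nthRootsFinset]
  have hinjD : Function.Injective (fun z : ℂ => (!![z, 0; 0, z^5] : Matrix (Fin 2) (Fin 2) ℂ)) := by
    intro x y h
    have h' : (!![x, 0; 0, x^5] : Matrix (Fin 2) (Fin 2) ℂ) = !![y, 0; 0, y^5] := h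
    have h00 : (!![x, 0; 0, x^5] : Matrix (Fin 2) (Fin 2) ℂ) 0 0 = !![y, 0; 0, y^5] 0 0 := by
      rw [h']
    simpa using h00
  have hinjA : Function.Injective
      (fun z : ℂ => (!![0, -z^5; z, 0] : Matrix (Fin 2) (Fin 2) ℂ)) := by
    intro x y h
    have h' : (!![0, -x^5; x, 0] : Matrix (Fin 2) (Fin 2) ℂ) = !![0, -y^5; y, 0] := h
    have h10 : (!![0, -x^5; x, 0] : Matrix (Fin 2) (Fin 2) ℂ) 1 0 = !![0, -y^5; y, 0] 1 0 := by
      rw [h']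
    simpa using h10
  have hdisj : Disjoint ((fun z : ℂ => (!![z, 0; 0, z^5] : Matrix (Fin 2) (Fin 2) ℂ)) '' R)
      ((fun z : ℂ => (!![0, -z^5; z, 0] : Matrix (Fin 2) (Fin 2) ℂ)) '' R) := by
    rw [Set.disjoint_left]
    rintro m ⟨z, hz, rfl⟩ ⟨w, hw, hwm⟩
    have hz' : z ^ 6 = 1 := hz
    have hwm' : (!![(0:ℂ), -w^5; w, 0] : Matrix (Fin 2) (Fin 2) ℂ) = !![z, 0; 0, z^5] := hwm
    have h00 : (!![(0:ℂ), -w^5; w, 0] : Matrix (Fin 2) (Fin 2) ℂ) 0 0 = !![z, 0; 0, z^5] 0 0 := by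
      rw [hwm']
    simp only [Matrix.cons_val', Matrix.cons_val_zero, Matrix.empty_val',
      Matrix.cons_val_fin_one, Matrix.of_apply] at h00
    rw [← h00] at hz'
    norm_num at hz'
  have hcount : T.ncard = 12 := by
    rw [hTdef, Set.ncard_union_eq hdisj (hRfin.image _) (hRfin.image _),
      Set.ncard_image_of_injective _ hinjD, Set.ncard_image_of_injective _ hinjA, hRcard]
  calc S.ncard = (((↑·) : Matrix.SpecialLinearGroup (Fin 2) ℂ → Matrix (Fin 2) (Fin 2) ℂ) '' S).ncard :=
        (Set.ncard_image_of_injective S hinj).symm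
    _ = T.ncard := by rw [himg]
    _ = 12 := hcount
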